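/- Every bounded-input bounded-output functional f : ℝⁿ → ℝ (i.e., with finite 2-induced norm) admits a representation f(x) = ⟨k, g(x)⟩ for all x ∈ ℝⁿ, where k ∈ ℝ^{n+1} is a fixed vector and g : ℝⁿ → ℝ^{n+1} is injective and norm-preserving (‖g(x)‖₂ = ‖x‖₂ for all x). -/

import Mathlib

open scoped RealInnerProductSpace

theorem stmt13 {n : ℕ} (f : EuclideanSpace ℝ (Fin n) → ℝ)
    (hf : ∃ c : ℝ, ∀ x, |f x| ≤ c * ‖x‖) :
    ∃ (k : EuclideanSpace ℝ (Fin (n + 1))) (g : EuclideanSpace ℝ (Fin n) →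
        EuclideanSpace ℝ (Fin (n + 1))),
      Function.Injective g ∧ (∀ x, ‖g x‖ = ‖x‖) ∧ ∀ x, f x = ⟪k, g x⟫ := by
  obtain ⟨c, hc⟩ := hf
  set σ : ℝ := max c 0 + 1 with hσdef
  have hσpos : (0:ℝ) < σ := lt_of_le_of_lt (le_max_right c 0) (lt_add_one _)
  have hf0 : f 0 = 0 := by
    have h := hc 0
    simp at h
    exact h
  have hlt : ∀ x : EuclideanSpace ℝ (Fin n), x ≠ 0 → (f x / σ)^2 < ‖x‖^2 := by
    intro x hx
    have hxpos : (0:ℝ) < ‖x‖ := norm_pos_iff.mpr hx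
    have h1 : |f x| < σ * ‖x‖ := by
      calc |f x| ≤ c * ‖x‖ := hc x
        _ ≤ max c 0 * ‖x‖ := by
            exact mul_le_mul_of_nonneg_right (le_max_left c 0) (le_of_lt hxpos)
        _ < σ * ‖x‖ := by
            apply mul_lt_mul_of_pos_right _ hxpos
            exact lt_add_one _
    have h2 : |f x / σ| < ‖x‖ := by
      rw [abs_div, abs_of_pos hσpos, div_lt_iff₀ hσpos]
      linarith [h1]
    calc (f x / σ)^2 = |f x / σ|^2 := (sq_abs _).symm
      _ < ‖x‖^2 := pow_lt_pow_left₀ h2 (abs_nonneg _) two_ne_zero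
  set t : EuclideanSpace ℝ (Fin n) → ℝ :=
    fun x => Real.sqrt (‖x‖^2 - (f x / σ)^2) / ‖x‖ with ht_def
  have htpos : ∀ x, x ≠ 0 → 0 < t x := by
    intro x hx
    have hxpos : (0:ℝ) < ‖x‖ := norm_pos_iff.mpr hx
    exact div_pos (Real.sqrt_pos.mpr (by linarith [hlt x hx])) hxpos
  have htsq : ∀ x, x ≠ 0 → (t x)^2 * ‖x‖^2 = ‖x‖^2 - (f x / σ)^2 := by
    intro x hx
    have hxpos : (0:ℝ) < ‖x‖ := norm_pos_iff.mpr hx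
    have hA : (0:ℝ) ≤ ‖x‖^2 - (f x / σ)^2 := le_of_lt (by linarith [hlt x hx])
    rw [ht_def]
    rw [div_pow, Real.sq_sqrt hA, div_mul_cancel₀ _ (pow_ne_zero 2 (ne_of_gt hxpos))]
  set g : EuclideanSpace ℝ (Fin n) → EuclideanSpace ℝ (Fin (n+1)) :=
    fun x => WithLp.toLp 2 (fun i => Fin.cases (f x / σ) (fun j => t x * x j) i : Fin (n+1) → ℝ) with hg_def
  have hg0 : ∀ x, g x 0 = f x / σ := fun x => rfl
  have hgs : ∀ x j, g x j.succ = t x * x j := fun x j => rfl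
  have hsum : ∀ x : EuclideanSpace ℝ (Fin n), ‖x‖^2 = ∑ j, (x j)^2 := by
    intro x
    rw [EuclideanSpace.norm_eq, Real.sq_sqrt (by positivity)]
    simp [sq_abs]
  have hnorm : ∀ x, ‖g x‖ = ‖x‖ := by
    intro x
    have key : ∑ i, (g x i)^2 = ‖x‖^2 := by
      rw [Fin.sum_univ_succ]
      simp only [hg0, hgs]
      have : ∑ j, (t x * x j)^2 = (t x)^2 * ∑ j, (x j)^2 := by
        rw [Finset.mul_sum]; congr 1; ext j; ring
      rw [this, ← hsum x]
      by_cases hx : x = 0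
      · subst hx
        simp [hf0]
      · rw [htsq x hx]; ring
    rw [EuclideanSpace.norm_eq]
    simp only [Real.norm_eq_abs, sq_abs]
    rw [key, Real.sqrt_sq (norm_nonneg x)]
  refine ⟨WithLp.toLp 2 (Fin.cons σ (fun _ => 0) : ∀ _ : Fin (n+1), ℝ), g, ?_, hnorm, ?_⟩
  · intro x y hxy
    have hnx : ‖x‖ = ‖y‖ := by rw [← hnorm x, ← hnorm y, hxy]
    by_cases hx : x = 0
    · subst hx
      have : ‖y‖ = 0 := by rw [← hnx]; simp
      exact (norm_eq_zero.mp this).symm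
    · have hy : y ≠ 0 := by
        intro h; subst h; exact hx (norm_eq_zero.mp (by rw [hnx]; simp))
      have hfeq : f x = f y := by
        have h0 : g x 0 = g y 0 := by rw [hxy]
        rw [hg0, hg0] at h0
        field_simp at h0
        exact h0
      have hteq : t x = t y := by rw [ht_def]; simp only [hfeq, hnx]
      ext j
      have hj : g x j.succ = g y j.succ := by rw [hxy]
      rw [hgs, hgs, hteq] at hj
      exact mul_left_cancel₀ (ne_of_gt (htpos y hy)) hj
  · intro x
    rw [PiLp.inner_apply, Fin.sum_univ_succ]
    simp only [RCLike.inner_apply, starRingEnd_apply, star_trivial, hg0, hgs, PiLp.toLp_apply,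
      Fin.cons_zero, Fin.cons_succ, zero_mul, mul_zero, Finset.sum_const_zero, add_zero]
    field_simp
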